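/- arXiv:1804.00106 — 3 statements merged into one kernel-verified Lean document; each statement's English description precedes it below -/
import Mathlib

section
/- (Correctness of the decoupled SDP relaxation ellipsoid) Let λ₁, …, λₘ ≥ 0 with Σ_{i=1}^m λᵢ > 0, and suppose the (n+1)×(n+1) block matrix M(λ) is positive semidefinite. Define P₀ = (Σ_{i=1}^m λᵢPᵢ⁻¹)⁻¹ and x₀ = P₀ Σ_{i=1}^m λᵢPᵢ⁻¹xᵢ. Then F ⊆ E(x₀, P₀), i.e., every x ∈ ℝⁿ satisfying (x−xᵢ)ᵀPᵢ⁻¹(x−xᵢ) ≤ 1 for all i = 1, …, m also satisfies (x−x₀)ᵀP₀⁻¹(x−x₀) ≤ 1. -/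
open Matrix

/-- The symmetric `(n+1) × (n+1)` block matrix `M(λ)` of the decoupled SDP relaxation:
`[[1 - Σᵢλᵢ + ΣᵢλᵢxᵢᵀPᵢ⁻¹xᵢ, (ΣᵢλᵢPᵢ⁻¹xᵢ)ᵀ], [ΣᵢλᵢPᵢ⁻¹xᵢ, ΣᵢλᵢPᵢ⁻¹]]`. -/
noncomputable def decoupledBlockM {n m : ℕ} (x : Fin m → (Fin n → ℝ))
    (P : Fin m → Matrix (Fin n) (Fin n) ℝ) (lam : Fin m → ℝ) :
    Matrix (Unit ⊕ Fin n) (Unit ⊕ Fin n) ℝ :=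
  Matrix.fromBlocks
    (Matrix.of fun _ _ => 1 - (∑ i, lam i) + ∑ i, lam i * (x i ⬝ᵥ ((P i)⁻¹ *ᵥ x i)))
    (Matrix.replicateRow Unit (∑ i, lam i • ((P i)⁻¹ *ᵥ x i)))
    (Matrix.replicateCol Unit (∑ i, lam i • ((P i)⁻¹ *ᵥ x i)))
    (∑ i, lam i • (P i)⁻¹)

-- helper: entries of a real hermitian matrix are symmetric
lemma herm_entry {n : ℕ} {Q : Matrix (Fin n) (Fin n) ℝ} (hQ : Q.IsHermitian)
    (i k : Fin n) : Q i k = Q k i := by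
  have := hQ.apply k i
  simpa using this

lemma herm_transpose {n : ℕ} {Q : Matrix (Fin n) (Fin n) ℝ} (hQ : Q.IsHermitian) :
    Qᵀ = Q := by
  ext i k
  simpa [transpose_apply] using herm_entry hQ k i

lemma symm_dot {n : ℕ} {Q : Matrix (Fin n) (Fin n) ℝ} (hQ : Q.IsHermitian)
    (u v : Fin n → ℝ) : u ⬝ᵥ (Q *ᵥ v) = v ⬝ᵥ (Q *ᵥ u) := by
  rw [dotProduct_mulVec, ← mulVec_transpose, herm_transpose hQ, dotProduct_comm]

lemma dot_sum_smul {n m : ℕ} (v : Fin n → ℝ) (c : Fin m → ℝ) (w : Fin m → (Fin n → ℝ)) :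
    v ⬝ᵥ (∑ i, c i • w i) = ∑ i, c i * (v ⬝ᵥ w i) := by
  simp only [dotProduct, Finset.sum_apply, Pi.smul_apply, smul_eq_mul, Finset.mul_sum]
  rw [Finset.sum_comm]
  exact Finset.sum_congr rfl fun i _ => Finset.sum_congr rfl fun k _ => by ring

lemma sum_smul_mulVec {n m : ℕ} (M : Fin m → Matrix (Fin n) (Fin n) ℝ) (lam : Fin m → ℝ)
    (z : Fin n → ℝ) : (∑ i, lam i • M i) *ᵥ z = ∑ i, lam i • (M i *ᵥ z) := by
  ext j
  simp only [mulVec, dotProduct, Matrix.sum_apply, Matrix.smul_apply, Finset.sum_apply,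
    Pi.smul_apply, smul_eq_mul, Finset.sum_mul, Finset.mul_sum]
  rw [Finset.sum_comm]
  exact Finset.sum_congr rfl fun i _ => Finset.sum_congr rfl fun k _ => by ring

/-- (Correctness of the decoupled SDP relaxation ellipsoid) If `M(λ)` is positive semidefinite,
`P₀ = (Σᵢ λᵢPᵢ⁻¹)⁻¹` and `x₀ = P₀ Σᵢ λᵢPᵢ⁻¹xᵢ`, then every point of the intersection
`F = ⋂ᵢ E(xᵢ, Pᵢ)` lies in `E(x₀, P₀)`. -/
theorem decoupled_sdp_ellipsoid_contains_intersection (n m : ℕ) (hn : 0 < n) (hm : 0 < m)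
    (x : Fin m → (Fin n → ℝ)) (P : Fin m → Matrix (Fin n) (Fin n) ℝ)
    (hP : ∀ i, (P i).PosDef)
    (lam : Fin m → ℝ) (hlam : ∀ i, 0 ≤ lam i) (hlampos : 0 < ∑ i, lam i)
    (hM : (decoupledBlockM x P lam).PosSemidef)
    (P₀ : Matrix (Fin n) (Fin n) ℝ) (hP₀ : P₀ = (∑ i, lam i • (P i)⁻¹)⁻¹)
    (x₀ : Fin n → ℝ) (hx₀ : x₀ = P₀ *ᵥ (∑ i, lam i • ((P i)⁻¹ *ᵥ x i))) :
    ∀ y : Fin n → ℝ, (∀ i, (y - x i) ⬝ᵥ ((P i)⁻¹ *ᵥ (y - x i)) ≤ 1) →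
      (y - x₀) ⬝ᵥ (P₀⁻¹ *ᵥ (y - x₀)) ≤ 1 := by
  intro y hy
  have hQpd : ∀ i, ((P i)⁻¹).PosDef := fun i => (hP i).inv
  have hQh : ∀ i, ((P i)⁻¹).IsHermitian := fun i => (hQpd i).isHermitian
  set A : Matrix (Fin n) (Fin n) ℝ := ∑ i, lam i • (P i)⁻¹ with hA
  set b : Fin n → ℝ := ∑ i, lam i • ((P i)⁻¹ *ᵥ x i) with hb
  have hAmv : ∀ z, A *ᵥ z = ∑ i, lam i • ((P i)⁻¹ *ᵥ z) := fun z => sum_smul_mulVec _ _ _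
  have hAq : ∀ z w, z ⬝ᵥ (A *ᵥ w) = ∑ i, lam i * (z ⬝ᵥ ((P i)⁻¹ *ᵥ w)) := by
    intro z w
    rw [hAmv]
    exact dot_sum_smul z lam (fun i => (P i)⁻¹ *ᵥ w)
  -- A is positive definite
  obtain ⟨j, hj⟩ : ∃ j, 0 < lam j := by
    by_contra h
    push_neg at h
    exact absurd (Finset.sum_nonpos fun i _ => h i) (not_le.mpr hlampos)
  have hApd : A.PosDef := by
    refine Matrix.PosDef.of_dotProduct_mulVec_pos ?_ ?_
    · show Aᴴ = A
      ext i k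
      simp only [conjTranspose_apply, star_trivial, hA, Matrix.sum_apply, Matrix.smul_apply,
        smul_eq_mul]
      exact Finset.sum_congr rfl fun i' _ => by rw [herm_entry (hQh i') k i]
    · intro z hz
      have hzz : star z = z := by ext k; simp
      rw [hzz, hAq]
      refine Finset.sum_pos' (fun i _ => mul_nonneg (hlam i) ?_) ⟨j, Finset.mem_univ j, ?_⟩
      · have := (hQpd i).posSemidef.dotProduct_mulVec_nonneg z
        rwa [hzz] at this
      · have hpz := (hQpd j).dotProduct_mulVec_pos hz
        rw [hzz] at hpz
        exact mul_pos hj hpz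
  have hdet : IsUnit A.det := hApd.det_pos.ne'.isUnit
  have hP₀inv : P₀⁻¹ = A := by rw [hP₀]; exact Matrix.nonsing_inv_nonsing_inv A hdet
  have hAx₀ : A *ᵥ x₀ = b := by
    rw [hx₀, hP₀, mulVec_mulVec, Matrix.mul_nonsing_inv A hdet, one_mulVec]
  -- scalar abbreviations
  set q : Fin m → ℝ := fun i => y ⬝ᵥ ((P i)⁻¹ *ᵥ y) with hq
  set r : Fin m → ℝ := fun i => x i ⬝ᵥ ((P i)⁻¹ *ᵥ y) with hr
  set t : Fin m → ℝ := fun i => x i ⬝ᵥ ((P i)⁻¹ *ᵥ x i) with ht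
  -- constraint sum
  have hcon : ∀ i, q i - 2 * r i + t i ≤ 1 := by
    intro i
    have := hy i
    have hexp : (y - x i) ⬝ᵥ ((P i)⁻¹ *ᵥ (y - x i)) = q i - 2 * r i + t i := by
      rw [mulVec_sub, sub_dotProduct, dotProduct_sub, dotProduct_sub]
      have h1 : y ⬝ᵥ ((P i)⁻¹ *ᵥ x i) = r i := symm_dot (hQh i) y (x i)
      rw [h1, hq, hr, ht]; ring
    linarith [hexp ▸ this]
  have hsum : (∑ i, lam i * q i) - 2 * (∑ i, lam i * r i) + (∑ i, lam i * t i) ≤ ∑ i, lam i := by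
    have h1 : ∀ i ∈ Finset.univ, lam i * (q i - 2 * r i + t i) ≤ lam i := fun i _ => by
      nlinarith [hcon i, hlam i]
    have h2 := Finset.sum_le_sum h1
    calc (∑ i, lam i * q i) - 2 * (∑ i, lam i * r i) + (∑ i, lam i * t i)
        = ∑ i, lam i * (q i - 2 * r i + t i) := by
          rw [Finset.mul_sum, ← Finset.sum_sub_distrib, ← Finset.sum_add_distrib]
          exact Finset.sum_congr rfl fun i _ => by ring
      _ ≤ ∑ i, lam i := h2
  -- PSD inequality
  have hbx₀ : b ⬝ᵥ x₀ ≤ 1 - (∑ i, lam i) + ∑ i, lam i * t i := by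
    have hpsd := hM.dotProduct_mulVec_nonneg (Sum.elim (fun _ => (1:ℝ)) (-x₀))
    have hst : star (Sum.elim (fun _ => (1:ℝ)) (-x₀) : Unit ⊕ Fin n → ℝ)
        = Sum.elim (fun _ => (1:ℝ)) (-x₀) := by
      ext k; cases k <;> simp
    rw [hst] at hpsd
    rw [decoupledBlockM, fromBlocks_mulVec] at hpsd
    simp only [Sum.elim_comp_inl, Sum.elim_comp_inr] at hpsd
    simp only [sumElim_dotProduct_sumElim] at hpsd
    have e1 : (Matrix.of fun _ _ => 1 - (∑ i, lam i) + ∑ i, lam i * (x i ⬝ᵥ ((P i)⁻¹ *ᵥ x i))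
          : Matrix Unit Unit ℝ)
        *ᵥ (fun _ => (1:ℝ)) = fun _ => 1 - (∑ i, lam i) + ∑ i, lam i * t i := by
      ext u; simp [mulVec, dotProduct, ht]
    have e2 : Matrix.replicateRow Unit b *ᵥ (-x₀) = Function.const Unit (b ⬝ᵥ (-x₀)) :=
      replicateRow_mulVec_eq_const b (-x₀)
    have e3 : Matrix.replicateCol Unit b *ᵥ (fun _ => (1:ℝ)) = b := by
      ext k; simp [mulVec, dotProduct, Matrix.replicateCol_apply]
    have e4 : A *ᵥ (-x₀) = -b := by rw [mulVec_neg, hAx₀]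
    rw [← hb, ← hA, e1, e2, e3, e4] at hpsd
    simp only [add_neg_cancel, dotProduct_zero, add_zero] at hpsd
    have e5 : (fun _ => (1:ℝ)) ⬝ᵥ ((fun _ => 1 - (∑ i, lam i) + ∑ i, lam i * t i)
        + Function.const Unit (b ⬝ᵥ (-x₀))) = (1 - (∑ i, lam i) + ∑ i, lam i * t i) - b ⬝ᵥ x₀ := by
      simp [dotProduct, Function.const, dotProduct_neg]
      ring
    rw [e5] at hpsd
    linarith
  -- final computation
  rw [hP₀inv]
  have hyb : y ⬝ᵥ b = ∑ i, lam i * r i := by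
    rw [hb, dot_sum_smul]
    refine Finset.sum_congr rfl fun i _ => ?_
    rw [symm_dot (hQh i) y (x i)]
  have hgoal : (y - x₀) ⬝ᵥ (A *ᵥ (y - x₀))
      = (∑ i, lam i * q i) - 2 * (∑ i, lam i * r i) + b ⬝ᵥ x₀ := by
    rw [mulVec_sub, sub_dotProduct, dotProduct_sub, dotProduct_sub, hAx₀]
    have h1 : y ⬝ᵥ (A *ᵥ y) = ∑ i, lam i * q i := by
      rw [hAq]
    have h2 : x₀ ⬝ᵥ (A *ᵥ y) = y ⬝ᵥ b := by
      rw [symm_dot hApd.isHermitian x₀ y, hAx₀]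
    have h3 : x₀ ⬝ᵥ b = b ⬝ᵥ x₀ := dotProduct_comm _ _
    rw [h1, h2, h3, hyb]; ring
  rw [hgoal]
  linarith
end

section
/- (Bounding ellipsoid contains the intersection) Let t = (t₁, …, tₘ) be a weight vector with tᵢ ≥ 0 and Σᵢ tᵢ = 1. Then for every x ∈ F one has (x−x_t)ᵀP_t⁻¹(x−x_t) ≤ 1 − δ_t. In particular, if δ_t < 1 then F ⊆ E(x_t, (1−δ_t)P_t) = {x ∈ ℝⁿ : (x−x_t)ᵀ((1−δ_t)P_t)⁻¹(x−x_t) ≤ 1}. -/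
open Matrix

private lemma dot_sum' {n : Type*} [Fintype n] {ι : Type*} (s : Finset ι)
    (v : n → ℝ) (f : ι → n → ℝ) : v ⬝ᵥ (∑ i ∈ s, f i) = ∑ i ∈ s, v ⬝ᵥ f i := by
  simp only [dotProduct, Finset.sum_apply, Finset.mul_sum]
  exact Finset.sum_comm

private lemma sum_mulVec' {n : Type*} [Fintype n] {ι : Type*} (s : Finset ι)
    (A : ι → Matrix n n ℝ) (v : n → ℝ) :
    (∑ i ∈ s, A i) *ᵥ v = ∑ i ∈ s, (A i *ᵥ v) :=
  map_sum (Matrix.mulVec.addMonoidHomLeft v) A s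

private lemma dot_sym {n : Type*} [Fintype n] (M : Matrix n n ℝ) (hM : Mᵀ = M)
    (a b : n → ℝ) : a ⬝ᵥ (M *ᵥ b) = b ⬝ᵥ (M *ᵥ a) := by
  rw [dotProduct_mulVec, ← hM, vecMul_transpose, dotProduct_comm, hM]

private lemma quad_expand {n : Type*} [Fintype n] (M : Matrix n n ℝ) (hM : Mᵀ = M)
    (a b : n → ℝ) :
    (a - b) ⬝ᵥ (M *ᵥ (a - b)) =
      a ⬝ᵥ (M *ᵥ a) - 2 * (a ⬝ᵥ (M *ᵥ b)) + b ⬝ᵥ (M *ᵥ b) := by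
  have h := dot_sym M hM a b
  simp only [mulVec_sub, sub_dotProduct, dotProduct_sub]
  rw [← h]; ring

/-- (Bounding ellipsoid contains the intersection) For weights `tᵢ ≥ 0` with `Σᵢ tᵢ = 1`,
every `x ∈ F = ⋂ᵢ E(xᵢ, Pᵢ)` satisfies `(x-x_t)ᵀP_t⁻¹(x-x_t) ≤ 1 - δ_t`; in particular,
if `δ_t < 1` then `F ⊆ E(x_t, (1-δ_t)P_t)`. -/
theorem bounding_ellipsoid_contains_intersection (n m : ℕ) (hn : 0 < n) (hm : 0 < m)
    (x : Fin m → (Fin n → ℝ)) (P : Fin m → Matrix (Fin n) (Fin n) ℝ)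
    (hP : ∀ i, (P i).PosDef)
    (t : Fin m → ℝ) (ht : ∀ i, 0 ≤ t i) (hts : ∑ i, t i = 1)
    (Ptinv : Matrix (Fin n) (Fin n) ℝ) (hPtinv : Ptinv = ∑ i, t i • (P i)⁻¹)
    (xt : Fin n → ℝ) (hxt : xt = Ptinv⁻¹ *ᵥ (∑ i, t i • ((P i)⁻¹ *ᵥ x i)))
    (δ : ℝ) (hδ : δ = (∑ i, t i * (x i ⬝ᵥ ((P i)⁻¹ *ᵥ x i))) - xt ⬝ᵥ (Ptinv *ᵥ xt)) :
    (∀ y : Fin n → ℝ, (∀ i, (y - x i) ⬝ᵥ ((P i)⁻¹ *ᵥ (y - x i)) ≤ 1) →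
        (y - xt) ⬝ᵥ (Ptinv *ᵥ (y - xt)) ≤ 1 - δ) ∧
      (δ < 1 →
        {y : Fin n → ℝ | ∀ i, (y - x i) ⬝ᵥ ((P i)⁻¹ *ᵥ (y - x i)) ≤ 1} ⊆
          {y : Fin n → ℝ | (y - xt) ⬝ᵥ (((1 - δ) • Ptinv⁻¹)⁻¹ *ᵥ (y - xt)) ≤ 1}) := by
  -- symmetry of the inverses
  have hsym : ∀ i, ((P i)⁻¹)ᵀ = (P i)⁻¹ := by
    intro i
    have := ((hP i).inv).isHermitian
    simpa [Matrix.IsHermitian, Matrix.conjTranspose_eq_transpose_of_trivial] using this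
  have hPtsym : Ptinvᵀ = Ptinv := by
    rw [hPtinv, Matrix.transpose_sum]
    exact Finset.sum_congr rfl fun i _ => by rw [Matrix.transpose_smul, hsym]
  -- some weight is positive
  obtain ⟨i₀, hi₀⟩ : ∃ i, 0 < t i := by
    by_contra h
    push_neg at h
    have : ∀ i, t i = 0 := fun i => le_antisymm (h i) (ht i)
    simp [this] at hts
  -- Ptinv is positive definite
  have hPD : Ptinv.PosDef := by
    rw [Matrix.posDef_iff_dotProduct_mulVec]
    constructor
    · simpa [Matrix.IsHermitian, Matrix.conjTranspose_eq_transpose_of_trivial] using hPtsym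
    · intro v hv
      have hexp : star v ⬝ᵥ (Ptinv *ᵥ v) = ∑ i, t i * (v ⬝ᵥ ((P i)⁻¹ *ᵥ v)) := by
        rw [hPtinv, sum_mulVec', dot_sum']
        simp [smul_mulVec, dotProduct_smul]
      rw [hexp]
      apply Finset.sum_pos' (fun i _ => mul_nonneg (ht i) (show 0 < v ⬝ᵥ ((P i)⁻¹ *ᵥ v) by simpa using (hP i).inv.dotProduct_mulVec_pos hv).le)
      exact ⟨i₀, Finset.mem_univ _, mul_pos hi₀ (by simpa using (hP i₀).inv.dotProduct_mulVec_pos hv)⟩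
  have hdet : IsUnit Ptinv.det := isUnit_iff_ne_zero.mpr hPD.det_pos.ne'
  -- Ptinv *ᵥ xt equals the weighted sum
  have hS : Ptinv *ᵥ xt = ∑ i, t i • ((P i)⁻¹ *ᵥ x i) := by
    rw [hxt, Matrix.mulVec_mulVec, Matrix.mul_nonsing_inv _ hdet, Matrix.one_mulVec]
  -- main quadratic identity
  have key : ∀ y : Fin n → ℝ,
      (y - xt) ⬝ᵥ (Ptinv *ᵥ (y - xt)) =
        (∑ i, t i * ((y - x i) ⬝ᵥ ((P i)⁻¹ *ᵥ (y - x i)))) - δ := by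
    intro y
    have hL := quad_expand Ptinv hPtsym y xt
    have hR : ∀ i, t i * ((y - x i) ⬝ᵥ ((P i)⁻¹ *ᵥ (y - x i))) =
        t i * (y ⬝ᵥ ((P i)⁻¹ *ᵥ y)) - 2 * (t i * (y ⬝ᵥ ((P i)⁻¹ *ᵥ x i)))
          + t i * (x i ⬝ᵥ ((P i)⁻¹ *ᵥ x i)) := by
      intro i
      rw [quad_expand _ (hsym i)]; ring
    have h1 : ∑ i, t i * (y ⬝ᵥ ((P i)⁻¹ *ᵥ y)) = y ⬝ᵥ (Ptinv *ᵥ y) := by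
      rw [hPtinv, sum_mulVec', dot_sum']
      simp [smul_mulVec, dotProduct_smul]
    have h2 : ∑ i, t i * (y ⬝ᵥ ((P i)⁻¹ *ᵥ x i)) = y ⬝ᵥ (Ptinv *ᵥ xt) := by
      rw [hS, dot_sum']
      simp [dotProduct_smul]
    have h3 : y ⬝ᵥ (Ptinv *ᵥ xt) = xt ⬝ᵥ (Ptinv *ᵥ y) := dot_sym _ hPtsym y xt
    calc (y - xt) ⬝ᵥ (Ptinv *ᵥ (y - xt))
        = y ⬝ᵥ (Ptinv *ᵥ y) - 2 * (y ⬝ᵥ (Ptinv *ᵥ xt)) + xt ⬝ᵥ (Ptinv *ᵥ xt) := hL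
      _ = (∑ i, t i * ((y - x i) ⬝ᵥ ((P i)⁻¹ *ᵥ (y - x i)))) - δ := by
          simp only [hR, Finset.sum_add_distrib, Finset.sum_sub_distrib,
            ← Finset.mul_sum, h1, h2, hδ]
          ring
  have main : ∀ y : Fin n → ℝ, (∀ i, (y - x i) ⬝ᵥ ((P i)⁻¹ *ᵥ (y - x i)) ≤ 1) →
      (y - xt) ⬝ᵥ (Ptinv *ᵥ (y - xt)) ≤ 1 - δ := by
    intro y hy
    rw [key y]
    have : (∑ i, t i * ((y - x i) ⬝ᵥ ((P i)⁻¹ *ᵥ (y - x i)))) ≤ ∑ i, t i := by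
      refine Finset.sum_le_sum fun i _ => ?_
      calc t i * ((y - x i) ⬝ᵥ ((P i)⁻¹ *ᵥ (y - x i))) ≤ t i * 1 :=
            mul_le_mul_of_nonneg_left (hy i) (ht i)
        _ = t i := mul_one _
    linarith [hts ▸ this]
  refine ⟨main, fun hδ1 y hy => ?_⟩
  have h1δ : (0 : ℝ) < 1 - δ := by linarith
  haveI : Invertible (1 - δ) := invertibleOfNonzero h1δ.ne'
  have hinv : ((1 - δ) • Ptinv⁻¹)⁻¹ = (1 - δ)⁻¹ • Ptinv := by
    rw [Matrix.inv_smul _ _ (Matrix.isUnit_nonsing_inv_det _ hdet),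
      Matrix.nonsing_inv_nonsing_inv _ hdet, invOf_eq_inv]
  have hq := main y hy
  calc (y - xt) ⬝ᵥ (((1 - δ) • Ptinv⁻¹)⁻¹ *ᵥ (y - xt))
      = (1 - δ)⁻¹ * ((y - xt) ⬝ᵥ (Ptinv *ᵥ (y - xt))) := by
        rw [hinv, smul_mulVec, dotProduct_smul]; simp
    _ ≤ (1 - δ)⁻¹ * (1 - δ) := by
        exact mul_le_mul_of_nonneg_left hq (by positivity)
    _ = 1 := inv_mul_cancel₀ h1δ.ne'
end

section
/- (Bounding ellipsoid parameters are feasible for the decoupled SDP) Let t = (t₁, …, tₘ) be a weight vector with tᵢ ≥ 0 and Σᵢ tᵢ = 1, and suppose δ_t < 1. Define λᵢ = tᵢ/(1−δ_t) for i = 1, …, m. Then λᵢ ≥ 0, the (n+1)×(n+1) block matrix M(λ) is positive semidefinite, and moreover (Σ_{i=1}^m λᵢ Pᵢ⁻¹)⁻¹ = (1−δ_t)P_t and (Σ_{i=1}^m λᵢ Pᵢ⁻¹)⁻¹ (Σ_{i=1}^m λᵢ Pᵢ⁻¹ xᵢ) = x_t; that is, the decoupled-SDP ellipsoid associated with λ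 coincides with the bounding ellipsoid E(x_t, (1−δ_t)P_t). -/
open Matrix

private lemma psd_smul {k : ℕ} {A : Matrix (Fin k) (Fin k) ℝ} (hA : A.PosSemidef) {c : ℝ}
    (hc : 0 ≤ c) : (c • A).PosSemidef := by
  refine ⟨?_, fun y => ?_⟩
  · unfold Matrix.IsHermitian
    rw [conjTranspose_smul, hA.1.eq]
    simp
  · convert smul_nonneg hc (hA.2 y) using 1
    simp only [Finsupp.sum, Finset.mul_sum, smul_eq_mul, Matrix.smul_apply]
    refine Finset.sum_congr rfl fun i _ => Finset.sum_congr rfl fun j _ => ?_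
    ring

private lemma pd_smul {k : ℕ} {A : Matrix (Fin k) (Fin k) ℝ} (hA : A.PosDef) {c : ℝ}
    (hc : 0 < c) : (c • A).PosDef := by
  refine ⟨?_, fun y hy => ?_⟩
  · unfold Matrix.IsHermitian
    rw [conjTranspose_smul, hA.1.eq]
    simp
  · convert smul_pos hc (hA.2 hy) using 1
    simp only [Finsupp.sum, Finset.mul_sum, smul_eq_mul, Matrix.smul_apply]
    refine Finset.sum_congr rfl fun i _ => Finset.sum_congr rfl fun j _ => ?_
    ring

private lemma row_mul_mul_col {k : ℕ} (v : Fin k → ℝ) (M : Matrix (Fin k) (Fin k) ℝ)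
    (a b : Unit) :
    (Matrix.replicateRow Unit v * M * Matrix.replicateCol Unit v) a b = v ⬝ᵥ (M *ᵥ v) := by
  simp only [mul_apply, replicateRow_apply, replicateCol_apply, dotProduct, mulVec, Finset.sum_mul,
    Finset.mul_sum]
  rw [Finset.sum_comm]
  apply Finset.sum_congr rfl
  intro i _
  apply Finset.sum_congr rfl
  intro j _
  ring

/-- (Bounding ellipsoid parameters are feasible for the decoupled SDP) If `δ_t < 1` and
`λᵢ = tᵢ/(1-δ_t)`, then `λᵢ ≥ 0`, `M(λ)` is positive semidefinite, and the decoupled-SDP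
ellipsoid associated with `λ` coincides with the bounding ellipsoid `E(x_t, (1-δ_t)P_t)`:
`(Σᵢ λᵢPᵢ⁻¹)⁻¹ = (1-δ_t)P_t` and `(Σᵢ λᵢPᵢ⁻¹)⁻¹ (Σᵢ λᵢPᵢ⁻¹xᵢ) = x_t`. -/
theorem bounding_ellipsoid_feasible_for_decoupled_sdp (n m : ℕ) (hn : 0 < n) (hm : 0 < m)
    (x : Fin m → (Fin n → ℝ)) (P : Fin m → Matrix (Fin n) (Fin n) ℝ)
    (hP : ∀ i, (P i).PosDef)
    (t : Fin m → ℝ) (ht : ∀ i, 0 ≤ t i) (hts : ∑ i, t i = 1)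
    (Ptinv : Matrix (Fin n) (Fin n) ℝ) (hPtinv : Ptinv = ∑ i, t i • (P i)⁻¹)
    (xt : Fin n → ℝ) (hxt : xt = Ptinv⁻¹ *ᵥ (∑ i, t i • ((P i)⁻¹ *ᵥ x i)))
    (δ : ℝ) (hδ : δ = (∑ i, t i * (x i ⬝ᵥ ((P i)⁻¹ *ᵥ x i))) - xt ⬝ᵥ (Ptinv *ᵥ xt))
    (hδ1 : δ < 1)
    (lam : Fin m → ℝ) (hlam : ∀ i, lam i = t i / (1 - δ)) :
    (∀ i, 0 ≤ lam i) ∧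
      (decoupledBlockM x P lam).PosSemidef ∧
      (∑ i, lam i • (P i)⁻¹)⁻¹ = (1 - δ) • Ptinv⁻¹ ∧
      (∑ i, lam i • (P i)⁻¹)⁻¹ *ᵥ (∑ i, lam i • ((P i)⁻¹ *ᵥ x i)) = xt := by
  have hs : (0 : ℝ) < 1 - δ := by linarith
  have hs' : (1 - δ) ≠ 0 := ne_of_gt hs
  -- Ptinv is positive definite
  have hexists : ∃ i, 0 < t i := by
    by_contra h
    push_neg at h
    have : ∀ i ∈ Finset.univ, t i = 0 := fun i _ => le_antisymm (h i) (ht i)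
    rw [Finset.sum_congr rfl this] at hts
    simp at hts
  obtain ⟨i₀, hi₀⟩ := hexists
  have hPt : Ptinv.PosDef := by
    rw [hPtinv, ← Finset.add_sum_erase Finset.univ _ (Finset.mem_univ i₀)]
    refine Matrix.PosDef.add_posSemidef (pd_smul (hP i₀).inv hi₀) ?_
    refine Finset.sum_induction _ _ (fun a b ha hb => ha.add hb) Matrix.PosSemidef.zero ?_
    exact fun i _ => psd_smul (hP i).inv.posSemidef (ht i)
  have hdet : IsUnit Ptinv.det := hPt.det_pos.ne'.isUnit
  -- reduction of sums
  set w : Fin n → ℝ := ∑ i, t i • ((P i)⁻¹ *ᵥ x i) with hw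
  have hD : (∑ i, lam i • (P i)⁻¹) = (1 - δ)⁻¹ • Ptinv := by
    rw [hPtinv, Finset.smul_sum]
    apply Finset.sum_congr rfl
    intro i _
    rw [hlam i, smul_smul, div_eq_inv_mul]
  have hv : (∑ i, lam i • ((P i)⁻¹ *ᵥ x i)) = (1 - δ)⁻¹ • w := by
    rw [hw, Finset.smul_sum]
    apply Finset.sum_congr rfl
    intro i _
    rw [hlam i, smul_smul, div_eq_inv_mul]
  have hinv : (∑ i, lam i • (P i)⁻¹)⁻¹ = (1 - δ) • Ptinv⁻¹ := by
    rw [hD]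
    apply Matrix.inv_eq_right_inv
    rw [Matrix.smul_mul, Matrix.mul_smul, smul_smul, inv_mul_cancel₀ hs',
      Matrix.mul_nonsing_inv _ hdet, one_smul]
  have hmulvec : ((1 - δ) • Ptinv⁻¹) *ᵥ ((1 - δ)⁻¹ • w) = xt := by
    rw [smul_mulVec, mulVec_smul, smul_smul, mul_inv_cancel₀ hs', one_smul, hxt]
  refine ⟨fun i => by rw [hlam i]; exact div_nonneg (ht i) (le_of_lt hs), ?_, hinv, ?_⟩
  · -- positive semidefiniteness of the block matrix
    have hDpd : (∑ i, lam i • (P i)⁻¹).PosDef := by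
      rw [hD]; exact pd_smul hPt (by positivity)
    haveI : Invertible (∑ i, lam i • (P i)⁻¹) :=
      Matrix.invertibleOfIsUnitDet _ hDpd.det_pos.ne'.isUnit
    unfold decoupledBlockM
    have hcol : Matrix.replicateCol Unit (∑ i, lam i • ((P i)⁻¹ *ᵥ x i)) =
        (Matrix.replicateRow Unit (∑ i, lam i • ((P i)⁻¹ *ᵥ x i)))ᴴ := by
      rw [conjTranspose_replicateRow]
      simp
    rw [hcol]
    rw [Matrix.PosDef.fromBlocks₂₂ _ _ hDpd]
    have hzero : (Matrix.of fun _ _ : Unit =>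
          1 - (∑ i, lam i) + ∑ i, lam i * (x i ⬝ᵥ ((P i)⁻¹ *ᵥ x i))) -
        Matrix.replicateRow Unit (∑ i, lam i • ((P i)⁻¹ *ᵥ x i)) * (∑ i, lam i • (P i)⁻¹)⁻¹ *
          (Matrix.replicateRow Unit (∑ i, lam i • ((P i)⁻¹ *ᵥ x i)))ᴴ = 0 := by
      rw [← hcol]
      ext a b
      rw [Matrix.sub_apply, row_mul_mul_col]
      have hq : (∑ i, lam i • ((P i)⁻¹ *ᵥ x i)) ⬝ᵥ
          ((∑ i, lam i • (P i)⁻¹)⁻¹ *ᵥ (∑ i, lam i • ((P i)⁻¹ *ᵥ x i))) =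
          (1 - δ)⁻¹ * (xt ⬝ᵥ (Ptinv *ᵥ xt)) := by
        rw [hinv, hv, hmulvec, smul_dotProduct, smul_eq_mul]
        congr 1
        have hwxt : Ptinv *ᵥ xt = w := by
          rw [hxt, mulVec_mulVec, Matrix.mul_nonsing_inv _ hdet, one_mulVec]
        rw [← hwxt, dotProduct_comm]
      rw [hq]
      have hsum1 : (∑ i, lam i) = (1 - δ)⁻¹ := by
        have : ∀ i ∈ Finset.univ, lam i = t i * (1 - δ)⁻¹ := fun i _ => by
          rw [hlam i, div_eq_mul_inv]
        rw [Finset.sum_congr rfl this, ← Finset.sum_mul, hts, one_mul]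
      have hsum2 : (∑ i, lam i * (x i ⬝ᵥ ((P i)⁻¹ *ᵥ x i))) =
          (1 - δ)⁻¹ * (∑ i, t i * (x i ⬝ᵥ ((P i)⁻¹ *ᵥ x i))) := by
        rw [Finset.mul_sum]
        apply Finset.sum_congr rfl
        intro i _
        rw [hlam i]
        ring
      rw [hsum1, hsum2]
      simp only [Matrix.of_apply, Matrix.zero_apply]
      have hδ' : xt ⬝ᵥ (Ptinv *ᵥ xt) = (∑ i, t i * (x i ⬝ᵥ ((P i)⁻¹ *ᵥ x i))) - δ := by
        rw [hδ]; ring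
      rw [hδ']
      field_simp
      ring
    rw [hzero]
    exact Matrix.PosSemidef.zero
  · rw [hinv, hv, hmulvec]
end
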